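/- Let K be a field of characteristic p > 0, let N ≤ p, let Q = ((x₀+1)⋯(x_N+1))^{p-1} in K[x₀,…,x_N], and let Q_{p-1} be the homogeneous component of Q of degree p-1. Then Q_{p-1} vanishes to order exactly p-N at the point (1,1,…,1); that is, after substituting xᵢ ↦ xᵢ+1 for i ≥ 1 and x₀ ↦ 1, the resulting polynomial has no nonzero monomials of total degree less than p-N, but has a nonzero monomial of total degree p-N. -/

import Mathlib

open MvPolynomial
open Finset

lemma aux_sum_range_choose (d c : ℕ) :
    ∑ y ∈ Finset.range (d + 1), y.choose c = (d + 1).choose (c + 1) := by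
  rcases le_or_gt c d with h | h
  · rw [← Nat.sum_Icc_choose, Finset.range_eq_Ico,
      ← Finset.sum_Ico_consecutive _ (Nat.zero_le c) (by omega : c ≤ d + 1)]
    have : ∑ y ∈ Finset.Ico 0 c, y.choose c = 0 := by
      apply Finset.sum_eq_zero
      intro y hy
      simp only [Finset.mem_Ico] at hy
      exact Nat.choose_eq_zero_of_lt hy.2
    rw [this, zero_add, Finset.Ico_add_one_right_eq_Icc]
  · rw [Nat.choose_eq_zero_of_lt (by omega)]
    apply Finset.sum_eq_zero
    intro y hy
    simp only [Finset.mem_range] at hy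
    exact Nat.choose_eq_zero_of_lt (by omega)

lemma aux_W (d a c : ℕ) :
    ∑ xy ∈ Finset.HasAntidiagonal.antidiagonal d, xy.1.choose a * xy.2.choose c
      = (d + 1).choose (a + c + 1) := by
  induction d generalizing a with
  | zero =>
      cases a <;> cases c <;> simp [Nat.choose_eq_zero_of_lt]
  | succ d ih =>
      cases a with
      | zero =>
          simp only [Nat.choose_zero_right, one_mul, zero_add]
          rw [Finset.Nat.sum_antidiagonal_eq_sum_range_succ_mk]
          have h1 : ∀ k, d + 1 - k = d + 2 - 1 - k := fun k => by omega
          calc ∑ k ∈ range (d + 1 + 1), (d + 1 - k).choose c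
              = ∑ k ∈ range (d + 2), (d + 2 - 1 - k).choose c := by
                apply Finset.sum_congr rfl
                intro k _
                rw [h1 k]
            _ = ∑ y ∈ range (d + 2), y.choose c :=
                Finset.sum_range_reflect (fun y => Nat.choose y c) (d + 2)
            _ = (d + 2).choose (c + 1) := aux_sum_range_choose (d + 1) c
      | succ a =>
          rw [Finset.Nat.antidiagonal_succ, Finset.sum_cons, Finset.sum_map]
          have hsplit : ∀ xy ∈ Finset.HasAntidiagonal.antidiagonal d,
              ((⟨Nat.succ, Nat.succ_injective⟩ : ℕ ↪ ℕ).prodMap (Function.Embedding.refl ℕ)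
                  xy).1.choose (a + 1) *
                ((⟨Nat.succ, Nat.succ_injective⟩ : ℕ ↪ ℕ).prodMap (Function.Embedding.refl ℕ)
                  xy).2.choose c
              = xy.1.choose a * xy.2.choose c + xy.1.choose (a + 1) * xy.2.choose c := by
            intro xy _
            simp only [Function.Embedding.coe_prodMap, Function.Embedding.coeFn_mk,
              Function.Embedding.refl_apply, Prod.map]
            rw [Nat.choose_succ_succ, add_mul]
          rw [Finset.sum_congr rfl hsplit, Finset.sum_add_distrib, ih a, ih (a + 1),
            Nat.choose_eq_zero_of_lt (Nat.succ_pos a), zero_mul, zero_add]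
          rw [show a + 1 + c + 1 = (a + c + 1) + 1 by omega,
            Nat.choose_succ_succ (d + 1) (a + c + 1)]

lemma aux_E (u : ℕ) : ∀ d a c : ℕ,
    ∑ xy ∈ Finset.HasAntidiagonal.antidiagonal d, xy.1.choose a * (xy.2 + u).choose (c + u)
      = (d + u + 1).choose (a + c + u + 1) := by
  induction u with
  | zero => intro d a c; simpa using aux_W d a c
  | succ u ih =>
      intro d a c
      have hsplit : ∀ xy ∈ Finset.HasAntidiagonal.antidiagonal d,
          xy.1.choose a * (xy.2 + (u + 1)).choose (c + (u + 1))
            = xy.1.choose a * (xy.2 + u).choose (c + u)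
              + xy.1.choose a * (xy.2 + u).choose ((c + 1) + u) := by
        intro xy _
        rw [show xy.2 + (u + 1) = (xy.2 + u) + 1 by omega,
          show c + (u + 1) = (c + u) + 1 by omega,
          Nat.choose_succ_succ, Nat.mul_add, show c + 1 + u = c + u + 1 by omega]
      rw [Finset.sum_congr rfl hsplit, Finset.sum_add_distrib, ih d a c, ih d a (c + 1)]
      rw [show d + (u + 1) + 1 = (d + u + 1) + 1 by omega,
        show a + c + (u + 1) + 1 = (a + c + u + 1) + 1 by omega,
        Nat.choose_succ_succ (d + u + 1) (a + c + u + 1),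
        show a + (c + 1) + u + 1 = a + c + u + 1 + 1 by omega]


lemma aux_sum_adT_succ {M : Type*} [AddCommMonoid M] (k d : ℕ) (F : (Fin (k + 1) → ℕ) → M) :
    ∑ g ∈ Finset.Nat.antidiagonalTuple (k + 1) d, F g
      = ∑ xy ∈ Finset.HasAntidiagonal.antidiagonal d, ∑ g ∈ Finset.Nat.antidiagonalTuple k xy.2,
          F (Fin.cons xy.1 g) := by
  rw [Finset.sum_sigma']
  refine Finset.sum_nbij'
    (i := fun (g : Fin (k + 1) → ℕ) => (⟨(g 0, ∑ i : Fin k, g i.succ), Fin.tail g⟩ :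
      (_ : ℕ × ℕ) × (Fin k → ℕ)))
    (j := fun (x : (_ : ℕ × ℕ) × (Fin k → ℕ)) => Fin.cons x.1.1 x.2) ?_ ?_ ?_ ?_ ?_
  · intro g hg
    rw [Finset.Nat.mem_antidiagonalTuple] at hg
    rw [Finset.mem_sigma, Finset.HasAntidiagonal.mem_antidiagonal]
    constructor
    · rw [← hg, Fin.sum_univ_succ]
    · rw [Finset.Nat.mem_antidiagonalTuple]
      rfl
  · intro x hx
    rw [Finset.mem_sigma, Finset.HasAntidiagonal.mem_antidiagonal] at hx
    rw [Finset.Nat.mem_antidiagonalTuple] at hx ⊢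
    rw [Fin.sum_univ_succ]
    simp only [Fin.cons_zero, Fin.cons_succ]
    rw [hx.2, hx.1]
  · intro g hg
    exact Fin.cons_self_tail g
  · intro x hx
    rw [Finset.mem_sigma, Finset.HasAntidiagonal.mem_antidiagonal] at hx
    have h2 := hx.2
    rw [Finset.Nat.mem_antidiagonalTuple] at h2
    refine Sigma.ext ?_ ?_
    · simp only [Fin.cons_zero, Fin.cons_succ]
      rw [h2]
    · simp only [Fin.cons_succ]
      exact heq_of_eq (by ext i; simp [Fin.tail])
  · intro g hg
    rw [Fin.cons_self_tail]

lemma aux_D (k : ℕ) : ∀ (d : ℕ) (b : Fin (k + 1) → ℕ),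
    ∑ g ∈ Finset.Nat.antidiagonalTuple (k + 1) d, ∏ i, (g i).choose (b i)
      = (d + k).choose ((∑ i, b i) + k) := by
  induction k with
  | zero =>
      intro d b
      simp [Fin.sum_univ_one, Fin.prod_univ_one]
  | succ k ih =>
      intro d b
      rw [aux_sum_adT_succ]
      have hinner : ∀ xy ∈ Finset.HasAntidiagonal.antidiagonal d,
          (∑ g ∈ Finset.Nat.antidiagonalTuple (k + 1) xy.2,
            ∏ i, ((Fin.cons xy.1 g : Fin (k + 1 + 1) → ℕ) i).choose (b i))
          = xy.1.choose (b 0) * ((xy.2 + k).choose ((∑ i : Fin (k + 1), b i.succ) + k)) := by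
        intro xy _
        rw [← ih xy.2 (fun (i : Fin (k + 1)) => b i.succ), Finset.mul_sum]
        apply Finset.sum_congr rfl
        intro g _
        rw [Fin.prod_univ_succ]
        simp only [Fin.cons_zero, Fin.cons_succ]
      rw [Finset.sum_congr rfl hinner, aux_E k d (b 0) (∑ i : Fin (k + 1), b i.succ),
        show b 0 + (∑ i : Fin (k + 1), b i.succ) + k + 1 = (∑ i, b i) + (k + 1) by
          have h := Fin.sum_univ_succ b; omega,
        show d + k + 1 = d + (k + 1) by omega]

lemma aux_choose_neg_one (p : ℕ) (hp : p.Prime) (K : Type) [Field K] [CharP K p] :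
    ∀ j : ℕ, j ≤ p - 1 → (((p - 1).choose j : ℕ) : K) = (-1) ^ j := by
  intro j
  induction j with
  | zero => intro _; simp
  | succ j ih =>
      intro hj
      have hj' : j ≤ p - 1 := by omega
      have hp1 : p - 1 + 1 = p := Nat.succ_pred_eq_of_pos hp.pos
      have hpascal : (p - 1).choose j + (p - 1).choose (j + 1) = p.choose (j + 1) := by
        rw [← Nat.choose_succ_succ]
        exact congrArg₂ Nat.choose (by omega) rfl
      have hdvd : p ∣ p.choose (j + 1) := hp.dvd_choose_self (Nat.succ_ne_zero j) (by omega)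
      have h0 : ((p.choose (j + 1) : ℕ) : K) = 0 := (CharP.cast_eq_zero_iff K p _).mpr hdvd
      have hsum : (((p - 1).choose j : ℕ) : K) + (((p - 1).choose (j + 1) : ℕ) : K) = 0 := by
        rw [← Nat.cast_add, hpascal, h0]
      rw [ih hj'] at hsum
      rw [pow_succ]
      linear_combination hsum

lemma aux_dvd_choose (p N s : ℕ) (hp : p.Prime) (hN : 1 ≤ N) (h : s + N < p) :
    p ∣ (p + N - 1).choose (s + N) :=
  hp.dvd_choose h (by omega) (by omega)

lemma aux_lucas (p N : ℕ) (hp : p.Prime) (hN : 1 ≤ N) (hNp : N ≤ p) (K : Type) [Field K]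
    [CharP K p] : (((p + N - 1).choose p : ℕ) : K) = 1 := by
  haveI : Fact p.Prime := ⟨hp⟩
  have h := Choose.choose_modEq_choose_mod_mul_choose_div (p := p) (n := p + N - 1) (k := p)
  have hmod : (p + N - 1) % p = N - 1 := by
    have h1 : p + N - 1 = p + (N - 1) := by omega
    rw [h1, Nat.add_mod_left, Nat.mod_eq_of_lt (by omega)]
  have hdiv : (p + N - 1) / p = 1 := by
    have h1 : p + N - 1 = (N - 1) + p := by omega
    rw [h1, Nat.add_div_right _ hp.pos, Nat.div_eq_of_lt (by omega)]
  rw [hmod, hdiv, Nat.mod_self, Nat.div_self hp.pos] at h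
  simp only [Nat.choose_zero_right, Nat.choose_self, Nat.cast_one, one_mul] at h
  have h2 : (((p + N - 1).choose p : ℕ) : ZMod p) = 1 := by
    have := (ZMod.intCast_eq_intCast_iff _ _ _).mpr h
    push_cast at this
    exact_mod_cast this
  have h3 := congrArg (ZMod.castHom (dvd_refl p) K) h2
  rw [map_natCast, map_one] at h3
  exact h3

lemma aux_monomial_prod {n : ℕ} {K : Type} [Field K] (D : Fin n → (Fin n →₀ ℕ))
    (c : Fin n → K) :
    ∏ i, (monomial (D i) (c i) : MvPolynomial (Fin n) K)
      = monomial (∑ i, D i) (∏ i, c i) := by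
  rw [monomial_sum_index, map_prod, ← Finset.prod_mul_distrib]
  apply Finset.prod_congr rfl
  intro i _
  rw [C_mul_monomial, mul_one]

lemma aux_single_sum {n : ℕ} (g : Fin n → ℕ) :
    (∑ i, Finsupp.single i (g i)) = Finsupp.equivFunOnFinite.symm g := by
  ext j
  rw [Finsupp.finset_sum_apply]
  simp only [Finsupp.single_apply]
  rw [Finset.sum_ite_eq' Finset.univ j g]
  simp [Finsupp.equivFunOnFinite]
  rfl

lemma aux_coeff_prod {n : ℕ} {K : Type} [Field K] (e : Fin n → ℕ) (m : Fin n →₀ ℕ) :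
    coeff m (∏ i, ((X i : MvPolynomial (Fin n) K) + 1) ^ e i)
      = ∏ i, ((e i).choose (m i) : K) := by
  have step1 : ∀ i : Fin n, ((X i : MvPolynomial (Fin n) K) + 1) ^ e i
      = ∑ k ∈ Finset.range (e i + 1),
          monomial (Finsupp.single i k) (((e i).choose k : ℕ) : K) := by
    intro i
    rw [add_pow]
    apply Finset.sum_congr rfl
    intro k _
    rw [one_pow, mul_one, X_pow_eq_monomial]
    rw [show ((((e i).choose k : ℕ)) : MvPolynomial (Fin n) K) = C (((e i).choose k : ℕ) : K) by
      rfl]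
    rw [mul_comm, C_mul_monomial, mul_one]
  calc coeff m (∏ i, ((X i : MvPolynomial (Fin n) K) + 1) ^ e i)
      = coeff m (∑ g ∈ Fintype.piFinset (fun i => Finset.range (e i + 1)),
          monomial (Finsupp.equivFunOnFinite.symm g) (∏ i, (((e i).choose (g i) : ℕ) : K))) := by
        rw [Finset.prod_congr rfl (fun i _ => step1 i), Finset.prod_univ_sum]
        apply congrArg
        apply Finset.sum_congr rfl
        intro g _
        rw [aux_monomial_prod, aux_single_sum]
    _ = ∑ g ∈ Fintype.piFinset (fun i => Finset.range (e i + 1)),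
          if Finsupp.equivFunOnFinite.symm g = m then (∏ i, (((e i).choose (g i) : ℕ) : K))
          else 0 := by
        rw [MvPolynomial.coeff_sum]
        apply Finset.sum_congr rfl
        intro g _
        rw [coeff_monomial]
    _ = ∑ g ∈ Fintype.piFinset (fun i => Finset.range (e i + 1)),
          if g = ⇑m then (∏ i, (((e i).choose (g i) : ℕ) : K)) else 0 := by
        apply Finset.sum_congr rfl
        intro g _
        refine if_congr ?_ rfl rfl
        constructor
        · intro h; rw [← h]; rfl
        · intro h; rw [h]; exact Finsupp.equivFunOnFinite.symm_apply_apply m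
    _ = if ⇑m ∈ Fintype.piFinset (fun i => Finset.range (e i + 1)) then
          (∏ i, (((e i).choose (m i) : ℕ) : K)) else 0 := by
        rw [Finset.sum_ite_eq' _ ⇑m]
    _ = ∏ i, (((e i).choose (m i) : ℕ) : K) := by
        split_ifs with hmem
        · rfl
        · rw [Fintype.mem_piFinset] at hmem
          push_neg at hmem
          obtain ⟨i, hi⟩ := hmem
          rw [Finset.mem_range, not_lt] at hi
          refine (Finset.prod_eq_zero (Finset.mem_univ i) ?_).symm
          rw [Nat.choose_eq_zero_of_lt (by omega), Nat.cast_zero]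

theorem stmt2 (p N : ℕ) (hp : p.Prime) (K : Type) [Field K] [CharP K p]
    (hN : 1 ≤ N) (hNp : N ≤ p) :
    let Q : MvPolynomial (Fin (N + 1)) K := (∏ i, (X i + 1)) ^ (p - 1)
    let Qc : MvPolynomial (Fin (N + 1)) K := homogeneousComponent (p - 1) Q
    let R : MvPolynomial (Fin (N + 1)) K :=
      aeval (fun i : Fin (N + 1) => if i = 0 then 1 else X i + 1) Qc
    (∀ m : Fin (N + 1) →₀ ℕ, (m.sum fun _ e => e) < p - N → coeff m R = 0) ∧
    ∃ m : Fin (N + 1) →₀ ℕ, (m.sum fun _ e => e) = p - N ∧ coeff m R ≠ 0 := by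
  intro Q Qc R
  have hdeg : ∀ d : Fin (N + 1) →₀ ℕ, d.degree = ∑ i, d i := fun d =>
    Finset.sum_subset (Finset.subset_univ _) (fun i _ hi => Finsupp.notMem_support_iff.mp hi)
  have hmsum : ∀ m : Fin (N + 1) →₀ ℕ, (m.sum fun _ e => e) = ∑ i, m i := fun m =>
    Finsupp.sum_fintype _ _ (fun _ => rfl)
  -- coefficients of Qc
  have hQc : ∀ d : Fin (N + 1) →₀ ℕ,
      coeff d Qc = if (∑ i, d i) = p - 1 then ((-1 : K)) ^ (p - 1) else 0 := by
    intro d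
    have hQ : Q = ∏ i, ((X i : MvPolynomial (Fin (N + 1)) K) + 1) ^ (p - 1) :=
      (Finset.prod_pow _ _ _).symm
    rw [show Qc = homogeneousComponent (p - 1) Q from rfl, coeff_homogeneousComponent,
      hdeg d, hQ, aux_coeff_prod (fun _ => p - 1) d]
    split_ifs with h
    · have hle : ∀ i : Fin (N + 1), d i ≤ p - 1 := by
        intro i
        rw [← h]
        exact Finset.single_le_sum (f := fun i => d i) (fun _ _ => Nat.zero_le _)
          (Finset.mem_univ i)
      calc (∏ i, (((p - 1).choose (d i) : ℕ) : K))
          = ∏ i, ((-1 : K)) ^ (d i) := by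
            apply Finset.prod_congr rfl
            intro i _
            exact aux_choose_neg_one p hp K (d i) (hle i)
        _ = ((-1 : K)) ^ (∑ i, d i) := by rw [Finset.prod_pow_eq_pow_sum]
        _ = ((-1 : K)) ^ (p - 1) := by rw [h]
    · rfl
  -- explicit form of Qc
  have hQc2 : Qc = ∑ g ∈ Finset.Nat.antidiagonalTuple (N + 1) (p - 1),
      monomial (Finsupp.equivFunOnFinite.symm g) ((-1 : K) ^ (p - 1)) := by
    apply MvPolynomial.ext
    intro m
    rw [hQc m, coeff_sum]
    have h1 : ∀ g ∈ Finset.Nat.antidiagonalTuple (N + 1) (p - 1),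
        coeff m (monomial (Finsupp.equivFunOnFinite.symm g) ((-1 : K) ^ (p - 1)))
          = if g = ⇑m then (-1 : K) ^ (p - 1) else 0 := by
      intro g _
      rw [coeff_monomial]
      refine if_congr ?_ rfl rfl
      constructor
      · intro h; rw [← h]; rfl
      · intro h; rw [h]; exact Finsupp.equivFunOnFinite.symm_apply_apply m
    rw [Finset.sum_congr rfl h1, Finset.sum_ite_eq' _ ⇑m]
    have h2 : (⇑m ∈ Finset.Nat.antidiagonalTuple (N + 1) (p - 1)) ↔ (∑ i, m i) = p - 1 :=
      Finset.Nat.mem_antidiagonalTuple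
    split_ifs with ha hb hb
    · rfl
    · exact absurd (h2.mpr ha) hb
    · exact absurd (h2.mp hb) ha
    · rfl
  -- the key coefficient formula for R
  have key : ∀ m : Fin (N + 1) →₀ ℕ, coeff m R =
      (-1 : K) ^ (p - 1) *
        (if m 0 = 0 then (((p - 1 + N).choose ((∑ i, m i) + N) : ℕ) : K) else 0) := by
    intro m
    have hR : R = ∑ g ∈ Finset.Nat.antidiagonalTuple (N + 1) (p - 1),
        C ((-1 : K) ^ (p - 1)) *
          ∏ i, ((X i : MvPolynomial (Fin (N + 1)) K) + 1) ^
            (if i = (0 : Fin (N + 1)) then 0 else g i) := by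
      rw [show R = aeval (fun i : Fin (N + 1) =>
        if i = 0 then 1 else X i + 1) Qc from rfl, hQc2, map_sum]
      apply Finset.sum_congr rfl
      intro g _
      rw [aeval_monomial]
      have halg : algebraMap K (MvPolynomial (Fin (N + 1)) K) ((-1 : K) ^ (p - 1))
          = C ((-1 : K) ^ (p - 1)) := rfl
      rw [halg]
      congr 1
      rw [Finsupp.prod_fintype _ _ (fun i => pow_zero _)]
      apply Finset.prod_congr rfl
      intro i _
      have hg : (Finsupp.equivFunOnFinite.symm g) i = g i := rfl
      rw [hg]
      by_cases h0 : i = (0 : Fin (N + 1))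
      · rw [if_pos h0, if_pos h0, pow_zero, one_pow]
      · rw [if_neg h0, if_neg h0]
    rw [hR, coeff_sum]
    have h3 : ∀ g ∈ Finset.Nat.antidiagonalTuple (N + 1) (p - 1),
        coeff m (C ((-1 : K) ^ (p - 1)) *
          ∏ i, ((X i : MvPolynomial (Fin (N + 1)) K) + 1) ^
            (if i = (0 : Fin (N + 1)) then 0 else g i))
        = (-1 : K) ^ (p - 1) *
            ∏ i, (((if i = (0 : Fin (N + 1)) then 0 else g i).choose (m i) : ℕ) : K) := by
      intro g _
      rw [coeff_C_mul, aux_coeff_prod]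
    rw [Finset.sum_congr rfl h3, ← Finset.mul_sum]
    congr 1
    by_cases hm0 : m 0 = 0
    · rw [if_pos hm0]
      have h4 : ∀ g ∈ Finset.Nat.antidiagonalTuple (N + 1) (p - 1),
          (∏ i, (((if i = (0 : Fin (N + 1)) then 0 else g i).choose (m i) : ℕ) : K))
            = ((∏ i, (g i).choose (m i) : ℕ) : K) := by
        intro g _
        rw [Nat.cast_prod]
        apply Finset.prod_congr rfl
        intro i _
        by_cases h0 : i = (0 : Fin (N + 1))
        · rw [if_pos h0, h0, hm0]
          simp
        · rw [if_neg h0]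
      rw [Finset.sum_congr rfl h4, ← Nat.cast_sum, aux_D N (p - 1) ⇑m]
    · rw [if_neg hm0]
      apply Finset.sum_eq_zero
      intro g _
      apply Finset.prod_eq_zero (Finset.mem_univ (0 : Fin (N + 1)))
      rw [if_pos rfl, Nat.choose_eq_zero_of_lt (Nat.pos_of_ne_zero hm0), Nat.cast_zero]
  constructor
  · intro m hm
    rw [hmsum] at hm
    rw [key m]
    by_cases hm0 : m 0 = 0
    · rw [if_pos hm0]
      have hdvd : p ∣ (p - 1 + N).choose ((∑ i, m i) + N) := by
        have := aux_dvd_choose p N (∑ i, m i) hp hN (by omega)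
        rwa [show p + N - 1 = p - 1 + N by omega] at this
      rw [(CharP.cast_eq_zero_iff K p _).mpr hdvd, mul_zero]
    · rw [if_neg hm0, mul_zero]
  · refine ⟨Finsupp.single 1 (p - N), ?_, ?_⟩
    · rw [hmsum]
      rw [Finset.sum_eq_single_of_mem (1 : Fin (N + 1)) (Finset.mem_univ _)
        (fun i _ hi => Finsupp.single_eq_of_ne' (Ne.symm hi))]
      exact Finsupp.single_eq_same
    · have h10 : (1 : Fin (N + 1)) ≠ 0 := by
        apply Fin.ne_of_val_ne
        rw [Fin.val_one', Fin.val_zero, Nat.mod_eq_of_lt (by omega)]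
        omega
      rw [key]
      have hm0 : (Finsupp.single (1 : Fin (N + 1)) (p - N)) 0 = 0 :=
        Finsupp.single_eq_of_ne' h10
      rw [if_pos hm0]
      have hsum : (∑ i, (Finsupp.single (1 : Fin (N + 1)) (p - N)) i) = p - N := by
        rw [Finset.sum_eq_single_of_mem (1 : Fin (N + 1)) (Finset.mem_univ _)
          (fun i _ hi => Finsupp.single_eq_of_ne' (Ne.symm hi))]
        exact Finsupp.single_eq_same
      rw [hsum, show (p - N) + N = p by omega, show p - 1 + N = p + N - 1 by omega,
        aux_lucas p N hp hN hNp K, mul_one]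
      exact pow_ne_zero _ (neg_ne_zero.mpr one_ne_zero)
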